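/- On ⊕^2 T*ℝ with coordinates (u, p^t, p^x), 2-symplectic form ω = du ∧ dp^t ⊗ e_1 + du ∧ dp^x ⊗ e_2, and Hamiltonian h = (p^t)^2/(2ρ) - (p^x)^2/(2τ), a 2-vector field X = (X_1, X_2) satisfies ι_{X_1}ω^1 + ι_{X_2}ω^2 = dh if and only if X_1 = (p^t/ρ) ∂/∂u + A^1_t ∂/∂p^t + A^1_x ∂/∂p^x and X_2 = -(p^x/τ) ∂/∂u + A^2_t ∂/∂p^t + A^2_x ∂/∂p^x for functions with A^1_t + A^2_x = 0. -/

import Mathlib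

lemma fderiv_ham (ρ τ : ℝ) (x v : ℝ × ℝ × ℝ) :
    fderiv ℝ (fun y : ℝ × ℝ × ℝ => y.2.1 ^ 2 / (2 * ρ) - y.2.2 ^ 2 / (2 * τ)) x v
      = x.2.1 / ρ * v.2.1 - x.2.2 / τ * v.2.2 := by
  have h1 : HasFDerivAt (fun y : ℝ × ℝ × ℝ => y.2.1)
      ((ContinuousLinearMap.fst ℝ ℝ ℝ).comp (ContinuousLinearMap.snd ℝ ℝ (ℝ × ℝ))) x :=
    (hasFDerivAt_fst).comp x hasFDerivAt_snd
  have h2 : HasFDerivAt (fun y : ℝ × ℝ × ℝ => y.2.2)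
      ((ContinuousLinearMap.snd ℝ ℝ ℝ).comp (ContinuousLinearMap.snd ℝ ℝ (ℝ × ℝ))) x :=
    (hasFDerivAt_snd).comp x hasFDerivAt_snd
  have H := (((h1.mul h1).mul_const ((2 * ρ)⁻¹)).sub ((h2.mul h2).mul_const ((2 * τ)⁻¹)))
  have heq : (fun y : ℝ × ℝ × ℝ => y.2.1 ^ 2 / (2 * ρ) - y.2.2 ^ 2 / (2 * τ))
      = fun y : ℝ × ℝ × ℝ => y.2.1 * y.2.1 * (2 * ρ)⁻¹ - y.2.2 * y.2.2 * (2 * τ)⁻¹ := by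
    funext y; ring
  rw [heq, HasFDerivAt.fderiv (f := fun y : ℝ × ℝ × ℝ => y.2.1 * y.2.1 * (2 * ρ)⁻¹ - y.2.2 * y.2.2 * (2 * τ)⁻¹) H]
  simp
  ring

/- STATEMENT 15 -/
theorem vibrating_string_Hamiltonian_2_vector_fields
    (ρ τ : ℝ) (hρ : 0 < ρ) (hτ : 0 < τ)
    (X₁ X₂ : ℝ × ℝ × ℝ → ℝ × ℝ × ℝ) :
    (∀ x v : ℝ × ℝ × ℝ,
      ((X₁ x).1 * v.2.1 - v.1 * (X₁ x).2.1)
        + ((X₂ x).1 * v.2.2 - v.1 * (X₂ x).2.2)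
      = fderiv ℝ (fun y : ℝ × ℝ × ℝ => y.2.1 ^ 2 / (2 * ρ) - y.2.2 ^ 2 / (2 * τ)) x v) ↔
    (∀ x : ℝ × ℝ × ℝ,
      (X₁ x).1 = x.2.1 / ρ ∧
      (X₂ x).1 = -(x.2.2 / τ) ∧
      (X₁ x).2.1 + (X₂ x).2.2 = 0) := by
  constructor
  · intro h x
    have e1 := h x (0, 1, 0)
    have e2 := h x (0, 0, 1)
    have e3 := h x (1, 0, 0)
    rw [fderiv_ham] at e1 e2 e3
    simp at e1 e2 e3
    refine ⟨by linarith, by linarith, by linarith⟩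
  · intro h x v
    obtain ⟨h1, h2, h3⟩ := h x
    rw [fderiv_ham, h1, h2]
    linear_combination (-v.1) * h3
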